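/- Let B_1,…,B_n be p×p complex matrices (square case m = p) with F_0(z) = ∑_{j=1}^n z^{-j} B_j unitary for all z on the unit circle (F_0(z)*F_0(z) = I_p = F_0(z)F_0(z)*), and let H_0 be the associated np×np block Hankel matrix. Then I_{np} − H_0* H_0 is an orthogonal projection: it is Hermitian and (I_{np} − H_0* H_0)² = I_{np} − H_0* H_0. -/

import Mathlib

open Matrix Finset Polynomial

/-! ### Auxiliary machinery -/

lemma fir_circle_infinite : {z : ℂ | ‖z‖ = 1}.Infinite := by
  apply Set.infinite_of_injective_forall_mem
    (f := fun t : ℕ => Complex.exp ((1/(t+1) : ℝ) * Complex.I))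
  case hf => intro t; exact Complex.norm_exp_ofReal_mul_I _
  intro s t hst
  simp only [Complex.exp_eq_exp_iff_exists_int] at hst
  obtain ⟨m, hm⟩ := hst
  have h2 : ((1/(s+1) : ℝ) : ℂ) = ((1/(t+1) : ℝ) : ℂ) + m * (2 * Real.pi) := by
    have hI : (Complex.I : ℂ) ≠ 0 := Complex.I_ne_zero
    rw [show ((m:ℂ) * (2 * Real.pi * Complex.I)) = ((m:ℂ) * (2*Real.pi)) * Complex.I by ring] at hm
    rw [show ((1/(t+1):ℝ):ℂ) * Complex.I + (m:ℂ)*(2*Real.pi)*Complex.I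
        = (((1/(t+1):ℝ):ℂ) + (m:ℂ)*(2*Real.pi))*Complex.I by ring] at hm
    exact mul_right_cancel₀ hI hm
  have h3 : (1/(s+1) : ℝ) = (1/(t+1) : ℝ) + m * (2 * Real.pi) := by
    exact_mod_cast h2
  have hpi := Real.pi_gt_three
  have hs1 : (0:ℝ) < 1/(s+1) := by positivity
  have hs2 : (1/(s+1):ℝ) ≤ 1 := by
    rw [div_le_one (by positivity)]; linarith [Nat.cast_nonneg (α := ℝ) s]
  have ht1 : (0:ℝ) < 1/(t+1) := by positivity
  have ht2 : (1/(t+1):ℝ) ≤ 1 := by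
    rw [div_le_one (by positivity)]; linarith [Nat.cast_nonneg (α := ℝ) t]
  have hm0 : m = 0 := by
    by_contra hne
    rcases lt_or_gt_of_ne hne with h | h
    · have : (m:ℝ) ≤ -1 := by exact_mod_cast (by omega : m ≤ -1)
      nlinarith
    · have : (1:ℝ) ≤ (m:ℝ) := by exact_mod_cast (by omega : (1:ℤ) ≤ m)
      nlinarith
  rw [hm0] at h3
  simp only [Int.cast_zero, zero_mul, add_zero] at h3
  field_simp at h3; exact_mod_cast (by linarith : (s:ℝ) = t)

/-- Extraction of Fourier coefficients of a Laurent polynomial identity on the circle. -/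
lemma fir_extract (n : ℕ) (hn : 0 < n) (c : ℕ → ℕ → ℂ) (δ : ℂ)
    (h : ∀ z : ℂ, ‖z‖ = 1 → ∑ j ∈ range n, ∑ k ∈ range n, z ^ ((j:ℤ) - k) * c j k = δ)
    (d : ℤ) :
    ∑ t ∈ range n, (if 0 ≤ (t:ℤ) + d ∧ (t:ℤ) + d < (n:ℤ) then c t ((t:ℤ)+d).toNat else 0)
      = if d = 0 then δ else 0 := by
  by_cases hd : d ≤ -(n:ℤ) ∨ (n:ℤ) ≤ d
  · rw [if_neg (by omega), Finset.sum_eq_zero]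
    intro t ht
    rw [if_neg]
    simp only [Finset.mem_range] at ht
    omega
  push_neg at hd
  set P : Polynomial ℂ :=
    (∑ j ∈ range n, ∑ k ∈ range n, C (c j k) * X ^ (j + (n - 1 - k))) - C δ * X ^ (n - 1) with hP
  have hzero : P = 0 := by
    apply Polynomial.eq_zero_of_infinite_isRoot
    apply fir_circle_infinite.mono
    intro z hz
    have hz1 : ‖z‖ = 1 := hz
    have hzne : z ≠ 0 := by
      intro h0; rw [h0] at hz1; simp at hz1
    simp only [Set.mem_setOf_eq, Polynomial.IsRoot, hP, eval_sub, eval_mul, eval_pow, eval_C,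
      eval_X, Polynomial.eval_finset_sum]
    have key : ∀ j ∈ range n, ∀ k ∈ range n,
        c j k * z ^ (j + (n - 1 - k)) = (z ^ ((j:ℤ) - k) * c j k) * z ^ (n-1) := by
      intro j hj k hk
      simp only [Finset.mem_range] at hj hk
      have he : ((j + (n - 1 - k) : ℕ) : ℤ) = ((j:ℤ) - k) + ((n-1 : ℕ) : ℤ) := by omega
      have : (z ^ (j + (n - 1 - k) : ℕ) : ℂ) = z ^ (((j + (n - 1 - k) : ℕ)) : ℤ) := by
        rw [zpow_natCast]
      rw [this, he, zpow_add₀ hzne, zpow_natCast]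
      ring
    calc (∑ j ∈ range n, ∑ k ∈ range n, c j k * z ^ (j + (n - 1 - k))) - δ * z ^ (n-1)
        = (∑ j ∈ range n, ∑ k ∈ range n, (z ^ ((j:ℤ) - k) * c j k) * z ^ (n-1)) - δ * z ^ (n-1) := by
          congr 1
          exact Finset.sum_congr rfl fun j hj => Finset.sum_congr rfl fun k hk =>
            by simpa [eval_pow] using key j hj k hk
      _ = (∑ j ∈ range n, ∑ k ∈ range n, z ^ ((j:ℤ) - k) * c j k) * z ^ (n-1) - δ * z ^ (n-1) := by
          rw [Finset.sum_mul]
          congr 1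
          exact Finset.sum_congr rfl fun j hj => (Finset.sum_mul _ _ _).symm
      _ = 0 := by rw [h z hz1]; ring
  set m : ℕ := ((n:ℤ) - 1 - d).toNat with hm
  have hcoeff := congrArg (fun q => Polynomial.coeff q m) hzero
  simp only [hP, Polynomial.coeff_sub, Polynomial.finset_sum_coeff, Polynomial.coeff_C_mul,
    Polynomial.coeff_X_pow, Polynomial.coeff_zero, mul_ite, mul_one, mul_zero] at hcoeff
  have inner : ∀ j ∈ range n,
      (∑ k ∈ range n, if m = j + (n - 1 - k) then c j k else 0)
        = (if 0 ≤ (j:ℤ) + d ∧ (j:ℤ) + d < n then c j ((j:ℤ)+d).toNat else 0) := by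
    intro j hj
    simp only [Finset.mem_range] at hj
    by_cases hcase : 0 ≤ (j:ℤ) + d ∧ (j:ℤ) + d < n
    · rw [if_pos hcase]
      rw [Finset.sum_eq_single (((j:ℤ)+d).toNat)]
      · rw [if_pos (by omega)]
      · intro k hk hkne
        simp only [Finset.mem_range] at hk
        rw [if_neg (by omega)]
      · intro hnotmem
        simp only [Finset.mem_range] at hnotmem
        omega
    · rw [if_neg hcase, Finset.sum_eq_zero]
      intro k hk
      simp only [Finset.mem_range] at hk
      rw [if_neg (by omega)]
  rw [Finset.sum_congr rfl inner] at hcoeff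
  have hiff : (m = n - 1) ↔ (d = 0) := by omega
  rw [sub_eq_zero] at hcoeff
  rw [hcoeff]
  by_cases hd0 : d = 0
  · rw [if_pos hd0, if_pos (hiff.mpr hd0)]
  · rw [if_neg hd0, if_neg (fun hh => hd0 (hiff.mp hh))]

/-- Summing a window of a compactly supported function. -/
lemma fir_window (f : ℤ → ℂ) (n : ℕ) (hf : ∀ u : ℤ, u < 1 ∨ (n:ℤ) < u → f u = 0)
    (c : ℤ) (hc : c ≤ 1) (hc2 : 1 - (n:ℤ) ≤ c) :
    (∑ k ∈ range n, f (c + k)) + (∑ k ∈ range n, f (c + n + k)) = ∑ k ∈ range n, f (1 + k) := by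
  set t : ℕ := (1 - c).toNat with ht
  set i : ℕ := ((c:ℤ) + n - 1).toNat with hi
  have htn : t + n + i = n + n := by omega
  have e1 : (∑ k ∈ range n, f (c + k)) + (∑ k ∈ range n, f (c + n + k))
      = ∑ k ∈ range (n + n), f (c + k) := by
    rw [Finset.sum_range_add]
    congr 1
    apply Finset.sum_congr rfl
    intro k _
    congr 1
    push_cast
    ring
  rw [e1, ← htn, Finset.sum_range_add, Finset.sum_range_add]
  have z1 : ∑ k ∈ range t, f (c + k) = 0 := by
    apply Finset.sum_eq_zero
    intro k hk
    simp only [Finset.mem_range] at hk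
    exact hf _ (Or.inl (by omega))
  have z2 : ∑ k ∈ range i, f (c + (t + n + k : ℕ)) = 0 := by
    apply Finset.sum_eq_zero
    intro k hk
    exact hf _ (Or.inr (by push_cast; omega))
  rw [z1, z2, zero_add, add_zero]
  apply Finset.sum_congr rfl
  intro k _
  congr 1
  push_cast
  omega

lemma fir_shift_bij (n : ℕ) (e : ℤ) (F : ℤ → ℂ) :
    ∑ t ∈ range n, (if 0 ≤ (t:ℤ) - e ∧ (t:ℤ) - e < (n:ℤ) then F ((t:ℤ) - e) else 0)
      = ∑ k ∈ range n, (if 0 ≤ (k:ℤ) + e ∧ (k:ℤ) + e < (n:ℤ) then F k else 0) := by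
  rw [← Finset.sum_filter, ← Finset.sum_filter]
  refine Finset.sum_nbij' (fun t => ((t:ℤ) - e).toNat) (fun k => ((k:ℤ) + e).toNat) ?_ ?_ ?_ ?_ ?_
  · intro a ha
    simp only [Finset.mem_filter, Finset.mem_range] at ha ⊢
    omega
  · intro a ha
    simp only [Finset.mem_filter, Finset.mem_range] at ha ⊢
    omega
  · intro a ha
    simp only [Finset.mem_filter, Finset.mem_range] at ha
    omega
  · intro a ha
    simp only [Finset.mem_filter, Finset.mem_range] at ha
    omega
  · intro a ha
    simp only [Finset.mem_filter, Finset.mem_range] at ha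
    congr 1
    omega

/-- The strictly-upper-triangular block Toeplitz matrix built from the `Bⱼ`. -/
def Rm (p n : ℕ) (B : ℕ → Matrix (Fin p) (Fin p) ℂ) :
    Matrix (Fin n × Fin p) (Fin n × Fin p) ℂ :=
  fun x y => if x.1.val < y.1.val then B (y.1.val - x.1.val) x.2 y.2 else 0

/-- The lower-triangular block Toeplitz matrix with entries `B (n + j - i)`. -/
def H1m (p n : ℕ) (B : ℕ → Matrix (Fin p) (Fin p) ℂ) :
    Matrix (Fin n × Fin p) (Fin n × Fin p) ℂ :=
  fun x y => if y.1.val ≤ x.1.val then B (n + y.1.val - x.1.val) x.2 y.2 else 0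

lemma fir_claim1 (p n : ℕ) (B : ℕ → Matrix (Fin p) (Fin p) ℂ)
    (H₀ : Matrix (Fin n × Fin p) (Fin n × Fin p) ℂ)
    (hH₀ : ∀ (i j : Fin n) (a b : Fin p),
      H₀ (i, a) (j, b) = if i.val + j.val + 1 ≤ n then B (i.val + j.val + 1) a b else 0)
    (lagC : ∀ (a b : Fin p) (d : ℤ),
      (∑ t ∈ range n, if 0 ≤ (t:ℤ) + d ∧ (t:ℤ) + d < (n:ℤ) then
          ((B (t+1))ᴴ * B (((t:ℤ)+d).toNat + 1)) a b else 0)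
        = if d = 0 then (1 : Matrix (Fin p) (Fin p) ℂ) a b else 0) :
    (Rm p n B)ᴴ * (Rm p n B) + H₀ᴴ * H₀ = 1 := by
  ext ⟨i, a⟩ ⟨j, b⟩
  have hi := i.isLt
  have hj := j.isLt
  set e : ℤ := (j.val : ℤ) - i.val with he
  set f : ℤ → ℂ := fun u =>
    if 1 ≤ u ∧ u ≤ (n:ℤ) ∧ 1 ≤ u + e ∧ u + e ≤ (n:ℤ)
    then ((B u.toNat)ᴴ * B (u+e).toNat) a b else 0 with hf
  have hfz : ∀ u : ℤ, u < 1 ∨ (n:ℤ) < u → f u = 0 := by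
    intro u hu; rw [hf]; dsimp only; rw [if_neg (by omega)]
  have inner1 : ∀ k : Fin n,
      (∑ c : Fin p, (Rm p n B)ᴴ (i,a) (k,c) * (Rm p n B) (k,c) (j,b))
        = f ((i.val:ℤ) - k.val) := by
    intro k
    rw [hf]; dsimp only
    by_cases hki : k.val < i.val
    · by_cases hkj : k.val < j.val
      · rw [if_pos (by omega)]
        have h1 : (((i.val:ℤ) - k.val).toNat) = i.val - k.val := by omega
        have h2 : (((i.val:ℤ) - k.val + e).toNat) = j.val - k.val := by omega
        rw [h1, h2, Matrix.mul_apply]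
        apply Finset.sum_congr rfl
        intro c _
        rw [Matrix.conjTranspose_apply, Matrix.conjTranspose_apply]
        simp only [Rm, hki, hkj, if_true]
      · rw [if_neg (by omega)]
        apply Finset.sum_eq_zero
        intro c _
        simp only [Rm, hkj, if_false, mul_zero]
    · rw [if_neg (by omega)]
      apply Finset.sum_eq_zero
      intro c _
      rw [Matrix.conjTranspose_apply]
      simp only [Rm, hki, if_false, star_zero, zero_mul]
  have inner2 : ∀ k : Fin n,
      (∑ c : Fin p, H₀ᴴ (i,a) (k,c) * H₀ (k,c) (j,b))
        = f ((i.val:ℤ) + 1 + k.val) := by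
    intro k
    rw [hf]; dsimp only
    by_cases hki : k.val + i.val + 1 ≤ n
    · by_cases hkj : k.val + j.val + 1 ≤ n
      · rw [if_pos (by omega)]
        have h1 : (((i.val:ℤ) + 1 + k.val).toNat) = k.val + i.val + 1 := by omega
        have h2 : (((i.val:ℤ) + 1 + k.val + e).toNat) = k.val + j.val + 1 := by omega
        rw [h1, h2, Matrix.mul_apply]
        apply Finset.sum_congr rfl
        intro c _
        rw [Matrix.conjTranspose_apply, Matrix.conjTranspose_apply, hH₀ k i c a, hH₀ k j c b]
        rw [if_pos hki, if_pos hkj]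
      · rw [if_neg (by omega)]
        apply Finset.sum_eq_zero
        intro c _
        rw [hH₀ k j c b, if_neg hkj, mul_zero]
    · rw [if_neg (by omega)]
      apply Finset.sum_eq_zero
      intro c _
      rw [Matrix.conjTranspose_apply, hH₀ k i c a, if_neg hki, star_zero, zero_mul]
  rw [Matrix.add_apply, Matrix.mul_apply, Matrix.mul_apply, Matrix.one_apply]
  rw [Fintype.sum_prod_type, Fintype.sum_prod_type]
  rw [Finset.sum_congr rfl (fun k _ => inner1 k), Finset.sum_congr rfl (fun k _ => inner2 k)]
  rw [Fin.sum_univ_eq_sum_range (fun k => f ((i.val:ℤ) - k)) n,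
      Fin.sum_univ_eq_sum_range (fun k => f ((i.val:ℤ) + 1 + k)) n]
  have refl1 : ∑ k ∈ range n, f ((i.val:ℤ) - k)
      = ∑ k ∈ range n, f (((i.val:ℤ) + 1 - n) + k) := by
    rw [← Finset.sum_range_reflect (fun k => f (((i.val:ℤ) + 1 - n) + k)) n]
    apply Finset.sum_congr rfl
    intro k hk
    simp only [Finset.mem_range] at hk
    congr 1
    omega
  have refl2 : ∑ k ∈ range n, f ((i.val:ℤ) + 1 + k)
      = ∑ k ∈ range n, f (((i.val:ℤ) + 1 - n) + n + k) := by
    apply Finset.sum_congr rfl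
    intro k hk
    congr 1
    ring
  rw [refl1, refl2, fir_window f n hfz ((i.val:ℤ) + 1 - n) (by omega) (by omega)]
  have lageq : ∑ k ∈ range n, f (1 + k)
      = if e = 0 then (1 : Matrix (Fin p) (Fin p) ℂ) a b else 0 := by
    rw [← lagC a b e]
    apply Finset.sum_congr rfl
    intro t ht
    simp only [Finset.mem_range] at ht
    rw [hf]; dsimp only
    by_cases hc : 0 ≤ (t:ℤ) + e ∧ (t:ℤ) + e < n
    · rw [if_pos (by omega), if_pos hc]
      have h1 : ((1:ℤ) + t).toNat = t + 1 := by omega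
      have h2 : ((1:ℤ) + t + e).toNat = ((t:ℤ) + e).toNat + 1 := by omega
      rw [h1, h2]
    · rw [if_neg (by omega), if_neg hc]
  rw [lageq]
  rcases eq_or_ne i j with hij | hij
  · have he0 : e = 0 := by rw [he, hij]; ring
    simp [he0, hij, Matrix.one_apply, Prod.ext_iff]
  · have hne : e ≠ 0 := by
      rw [he]
      intro hh
      exact hij (Fin.ext (by omega))
    have hnp : ¬ ((i, a) = (j, b)) := by
      simp only [Prod.mk.injEq, not_and]
      intro hh; exact absurd hh hij
    rw [if_neg hne, if_neg hnp]

lemma fir_claim2 (p n : ℕ) (B : ℕ → Matrix (Fin p) (Fin p) ℂ)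
    (lagD : ∀ (a b : Fin p) (d : ℤ),
      (∑ t ∈ range n, if 0 ≤ (t:ℤ) + d ∧ (t:ℤ) + d < (n:ℤ) then
          (B (((t:ℤ)+d).toNat + 1) * (B (t+1))ᴴ) a b else 0)
        = if d = 0 then (1 : Matrix (Fin p) (Fin p) ℂ) a b else 0) :
    (Rm p n B) * (Rm p n B)ᴴ + (H1m p n B) * (H1m p n B)ᴴ = 1 := by
  ext ⟨i, a⟩ ⟨j, b⟩
  have hi := i.isLt
  have hj := j.isLt
  set e : ℤ := (i.val : ℤ) - j.val with he
  set f : ℤ → ℂ := fun u =>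
    if 1 ≤ u ∧ u ≤ (n:ℤ) ∧ 1 ≤ u + e ∧ u + e ≤ (n:ℤ)
    then (B u.toNat * (B (u+e).toNat)ᴴ) a b else 0 with hf
  have hfz : ∀ u : ℤ, u < 1 ∨ (n:ℤ) < u → f u = 0 := by
    intro u hu; rw [hf]; dsimp only; rw [if_neg (by omega)]
  have inner1 : ∀ k : Fin n,
      (∑ c : Fin p, (Rm p n B) (i,a) (k,c) * (Rm p n B)ᴴ (k,c) (j,b))
        = f (-(i.val:ℤ) + k.val) := by
    intro k
    rw [hf]; dsimp only
    by_cases hki : i.val < k.val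
    · by_cases hkj : j.val < k.val
      · rw [if_pos (by omega)]
        have h1 : ((-(i.val:ℤ) + k.val).toNat) = k.val - i.val := by omega
        have h2 : ((-(i.val:ℤ) + k.val + e).toNat) = k.val - j.val := by omega
        rw [h1, h2, Matrix.mul_apply]
        apply Finset.sum_congr rfl
        intro c _
        rw [Matrix.conjTranspose_apply, Matrix.conjTranspose_apply]
        simp only [Rm, hki, hkj, if_true]
      · rw [if_neg (by omega)]
        apply Finset.sum_eq_zero
        intro c _
        rw [Matrix.conjTranspose_apply]
        simp only [Rm, hkj, if_false, star_zero, mul_zero]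
    · rw [if_neg (by omega)]
      apply Finset.sum_eq_zero
      intro c _
      simp only [Rm, hki, if_false, zero_mul]
  have inner2 : ∀ k : Fin n,
      (∑ c : Fin p, (H1m p n B) (i,a) (k,c) * (H1m p n B)ᴴ (k,c) (j,b))
        = f (-(i.val:ℤ) + n + k.val) := by
    intro k
    rw [hf]; dsimp only
    by_cases hki : k.val ≤ i.val
    · by_cases hkj : k.val ≤ j.val
      · rw [if_pos (by omega)]
        have h1 : ((-(i.val:ℤ) + n + k.val).toNat) = n + k.val - i.val := by omega
        have h2 : ((-(i.val:ℤ) + n + k.val + e).toNat) = n + k.val - j.val := by omega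
        rw [h1, h2, Matrix.mul_apply]
        apply Finset.sum_congr rfl
        intro c _
        rw [Matrix.conjTranspose_apply, Matrix.conjTranspose_apply]
        simp only [H1m, hki, hkj, if_true]
      · rw [if_neg (by omega)]
        apply Finset.sum_eq_zero
        intro c _
        rw [Matrix.conjTranspose_apply]
        simp only [H1m, hkj, if_false, star_zero, mul_zero]
    · rw [if_neg (by omega)]
      apply Finset.sum_eq_zero
      intro c _
      simp only [H1m, hki, if_false, zero_mul]
  rw [Matrix.add_apply, Matrix.mul_apply, Matrix.mul_apply, Matrix.one_apply]
  rw [Fintype.sum_prod_type, Fintype.sum_prod_type]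
  rw [Finset.sum_congr rfl (fun k _ => inner1 k), Finset.sum_congr rfl (fun k _ => inner2 k)]
  rw [Fin.sum_univ_eq_sum_range (fun k => f (-(i.val:ℤ) + k)) n,
      Fin.sum_univ_eq_sum_range (fun k => f (-(i.val:ℤ) + n + k)) n]
  rw [fir_window f n hfz (-(i.val:ℤ)) (by omega) (by omega)]
  have lageq : ∑ k ∈ range n, f (1 + k)
      = if e = 0 then (1 : Matrix (Fin p) (Fin p) ℂ) a b else 0 := by
    have hd : (-e = 0) ↔ (e = 0) := by omega
    rw [← (by rw [if_congr hd rfl rfl] :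
      (if -e = 0 then (1 : Matrix (Fin p) (Fin p) ℂ) a b else 0)
        = if e = 0 then (1 : Matrix (Fin p) (Fin p) ℂ) a b else 0)]
    rw [← lagD a b (-e)]
    rw [show (fun t : ℕ => if 0 ≤ (t:ℤ) + (-e) ∧ (t:ℤ) + (-e) < (n:ℤ) then
          (B (((t:ℤ)+(-e)).toNat + 1) * (B (t+1))ᴴ) a b else 0)
        = (fun t : ℕ => if 0 ≤ (t:ℤ) - e ∧ (t:ℤ) - e < (n:ℤ) then
          (fun v : ℤ => (B (v.toNat + 1) * (B ((v + e).toNat + 1))ᴴ) a b) ((t:ℤ) - e) else 0)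
        from funext fun t => by
          by_cases hc : 0 ≤ (t:ℤ) - e ∧ (t:ℤ) - e < (n:ℤ)
          · rw [if_pos (by omega), if_pos hc]
            have h1 : ((t:ℤ) + (-e)).toNat = ((t:ℤ) - e).toNat := by omega
            have h2 : ((t:ℤ) - e + e).toNat = t := by omega
            dsimp only
            rw [h1, h2]
          · rw [if_neg (by omega), if_neg hc]]
    rw [fir_shift_bij n e (fun v : ℤ => (B (v.toNat + 1) * (B ((v + e).toNat + 1))ᴴ) a b)]
    apply Finset.sum_congr rfl
    intro k hk
    simp only [Finset.mem_range] at hk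
    rw [hf]; dsimp only
    by_cases hc : 0 ≤ (k:ℤ) + e ∧ (k:ℤ) + e < (n:ℤ)
    · rw [if_pos hc, if_pos (by omega)]
      have h1 : ((1:ℤ) + k).toNat = k + 1 := by omega
      have h2 : ((1:ℤ) + k + e).toNat = ((k:ℤ) + e).toNat + 1 := by omega
      have h3 : ((k:ℤ)).toNat = k := by omega
      rw [h1, h2, h3]
    · rw [if_neg hc, if_neg (by omega)]
  rw [lageq]
  rcases eq_or_ne i j with hij | hij
  · have he0 : e = 0 := by rw [he, hij]; ring
    simp [he0, hij, Matrix.one_apply, Prod.ext_iff]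
  · have hne : e ≠ 0 := by
      rw [he]
      intro hh
      exact hij (Fin.ext (by omega))
    have hnp : ¬ ((i, a) = (j, b)) := by
      simp only [Prod.mk.injEq, not_and]
      intro hh; exact absurd hh hij
    rw [if_neg hne, if_neg hnp]

lemma fir_claim3 (p n : ℕ) (B : ℕ → Matrix (Fin p) (Fin p) ℂ)
    (lagC : ∀ (a b : Fin p) (d : ℤ),
      (∑ t ∈ range n, if 0 ≤ (t:ℤ) + d ∧ (t:ℤ) + d < (n:ℤ) then
          ((B (t+1))ᴴ * B (((t:ℤ)+d).toNat + 1)) a b else 0)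
        = if d = 0 then (1 : Matrix (Fin p) (Fin p) ℂ) a b else 0) :
    (H1m p n B)ᴴ * (Rm p n B) = 0 := by
  ext ⟨i, a⟩ ⟨j, b⟩
  have hi := i.isLt
  have hj := j.isLt
  set e : ℤ := (j.val : ℤ) - i.val - n with he
  set f : ℤ → ℂ := fun u =>
    if 1 ≤ u ∧ u ≤ (n:ℤ) ∧ 1 ≤ u + e ∧ u + e ≤ (n:ℤ)
    then ((B u.toNat)ᴴ * B (u+e).toNat) a b else 0 with hf
  have hfz : ∀ u : ℤ, u < 1 ∨ (n:ℤ) < u → f u = 0 := by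
    intro u hu; rw [hf]; dsimp only; rw [if_neg (by omega)]
  have inner1 : ∀ k : Fin n,
      (∑ c : Fin p, (H1m p n B)ᴴ (i,a) (k,c) * (Rm p n B) (k,c) (j,b))
        = f ((n:ℤ) + i.val - k.val) := by
    intro k
    rw [hf]; dsimp only
    by_cases hki : i.val ≤ k.val
    · by_cases hkj : k.val < j.val
      · rw [if_pos (by omega)]
        have h1 : (((n:ℤ) + i.val - k.val).toNat) = n + i.val - k.val := by omega
        have h2 : (((n:ℤ) + i.val - k.val + e).toNat) = j.val - k.val := by omega
        rw [h1, h2, Matrix.mul_apply]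
        apply Finset.sum_congr rfl
        intro c _
        rw [Matrix.conjTranspose_apply, Matrix.conjTranspose_apply]
        simp only [H1m, Rm, hki, hkj, if_true]
      · rw [if_neg (by omega)]
        apply Finset.sum_eq_zero
        intro c _
        simp only [Rm, hkj, if_false, mul_zero]
    · rw [if_neg (by omega)]
      apply Finset.sum_eq_zero
      intro c _
      rw [Matrix.conjTranspose_apply]
      simp only [H1m, hki, if_false, star_zero, zero_mul]
  rw [Matrix.mul_apply, Matrix.zero_apply]
  rw [Fintype.sum_prod_type]
  rw [Finset.sum_congr rfl (fun k _ => inner1 k)]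
  rw [Fin.sum_univ_eq_sum_range (fun k => f ((n:ℤ) + i.val - k)) n]
  have refl1 : ∑ k ∈ range n, f ((n:ℤ) + i.val - k)
      = ∑ k ∈ range n, f (((i.val:ℤ) + 1 - n) + n + k) := by
    rw [← Finset.sum_range_reflect (fun k => f (((i.val:ℤ) + 1 - n) + n + k)) n]
    apply Finset.sum_congr rfl
    intro k hk
    simp only [Finset.mem_range] at hk
    congr 1
    omega
  have z1 : ∑ k ∈ range n, f (((i.val:ℤ) + 1 - n) + k) = 0 := by
    apply Finset.sum_eq_zero
    intro k hk
    simp only [Finset.mem_range] at hk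
    rw [hf]; dsimp only
    rw [if_neg (by omega)]
  have lageq : ∑ k ∈ range n, f (1 + k) = 0 := by
    have h0 := lagC a b e
    rw [if_neg (by omega)] at h0
    rw [← h0]
    apply Finset.sum_congr rfl
    intro t ht
    simp only [Finset.mem_range] at ht
    rw [hf]; dsimp only
    by_cases hc : 0 ≤ (t:ℤ) + e ∧ (t:ℤ) + e < n
    · rw [if_pos (by omega), if_pos hc]
      have h1 : ((1:ℤ) + t).toNat = t + 1 := by omega
      have h2 : ((1:ℤ) + t + e).toNat = ((t:ℤ) + e).toNat + 1 := by omega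
      rw [h1, h2]
    · rw [if_neg (by omega), if_neg hc]
  calc ∑ k ∈ range n, f ((n:ℤ) + i.val - k)
      = (∑ k ∈ range n, f (((i.val:ℤ) + 1 - n) + k))
        + ∑ k ∈ range n, f (((i.val:ℤ) + 1 - n) + n + k) := by rw [refl1, z1, zero_add]
    _ = ∑ k ∈ range n, f (1 + k) := fir_window f n hfz ((i.val:ℤ) + 1 - n) (by omega) (by omega)
    _ = 0 := lageq

/-- In the square case, if `F₀(z) = ∑_{j=1}^n z^{-j} B_j` is unitary on
the unit circle, then `I - H₀ᴴ H₀` is an orthogonal projection (Hermitian idempotent). -/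
theorem fir_unitary_hankel_projection
    (p n : ℕ) (B : ℕ → Matrix (Fin p) (Fin p) ℂ)
    (H₀ : Matrix (Fin n × Fin p) (Fin n × Fin p) ℂ)
    (hH₀ : ∀ (i j : Fin n) (a b : Fin p),
      H₀ (i, a) (j, b) = if i.val + j.val + 1 ≤ n then B (i.val + j.val + 1) a b else 0)
    (hiso : ∀ z : ℂ, ‖z‖ = 1 →
      (∑ j ∈ Finset.range n, z ^ (-(j + 1 : ℤ)) • B (j + 1))ᴴ *
        (∑ j ∈ Finset.range n, z ^ (-(j + 1 : ℤ)) • B (j + 1)) = 1)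
    (hcoiso : ∀ z : ℂ, ‖z‖ = 1 →
      (∑ j ∈ Finset.range n, z ^ (-(j + 1 : ℤ)) • B (j + 1)) *
        (∑ j ∈ Finset.range n, z ^ (-(j + 1 : ℤ)) • B (j + 1))ᴴ = 1) :
    (1 - H₀ᴴ * H₀)ᴴ = 1 - H₀ᴴ * H₀ ∧
    (1 - H₀ᴴ * H₀) * (1 - H₀ᴴ * H₀) = 1 - H₀ᴴ * H₀ := by
  rcases Nat.eq_zero_or_pos n with hn0 | hn
  · subst hn0
    constructor <;> · ext x y; exact x.1.elim0
  have hkey : ∀ z : ℂ, ‖z‖ = 1 → ∀ j k : ℕ,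
      star (z ^ (-(j + 1 : ℤ))) * z ^ (-(k + 1 : ℤ)) = z ^ ((j:ℤ) - k) := by
    intro z hz j k
    have hzne : z ≠ 0 := by intro h0; rw [h0] at hz; simp at hz
    have hstar : star z = z⁻¹ := by
      apply eq_inv_of_mul_eq_one_left
      have h : z * star z = 1 := by
        rw [show (star z) = (starRingEnd ℂ) z from rfl, Complex.mul_conj]
        rw [Complex.normSq_eq_norm_sq, hz]
        norm_num
      rw [mul_comm] at h
      exact h
    rw [star_zpow₀, hstar, _root_.inv_zpow, ← _root_.zpow_neg, neg_neg, ← zpow_add₀ hzne]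
    congr 1
    ring
  have hC : ∀ z : ℂ, ‖z‖ = 1 →
      ∑ j ∈ range n, ∑ k ∈ range n,
        (z ^ ((j:ℤ) - k)) • ((B (j+1))ᴴ * B (k+1)) = (1 : Matrix (Fin p) (Fin p) ℂ) := by
    intro z hz
    rw [← hiso z hz, Matrix.conjTranspose_sum, Finset.sum_mul_sum]
    apply Finset.sum_congr rfl
    intro j _
    apply Finset.sum_congr rfl
    intro k _
    rw [Matrix.conjTranspose_smul, Matrix.smul_mul, Matrix.mul_smul, smul_smul, hkey z hz j k]
  have hD : ∀ z : ℂ, ‖z‖ = 1 →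
      ∑ j ∈ range n, ∑ k ∈ range n,
        (z ^ ((k:ℤ) - j)) • (B (j+1) * (B (k+1))ᴴ) = (1 : Matrix (Fin p) (Fin p) ℂ) := by
    intro z hz
    rw [← hcoiso z hz, Matrix.conjTranspose_sum, Finset.sum_mul_sum]
    apply Finset.sum_congr rfl
    intro j _
    apply Finset.sum_congr rfl
    intro k _
    rw [Matrix.conjTranspose_smul, Matrix.smul_mul, Matrix.mul_smul, smul_smul,
      mul_comm (z ^ (-(j + 1 : ℤ))), hkey z hz k j]
  have lagC : ∀ (a b : Fin p) (d : ℤ),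
      (∑ t ∈ range n, if 0 ≤ (t:ℤ) + d ∧ (t:ℤ) + d < (n:ℤ) then
          ((B (t+1))ᴴ * B (((t:ℤ)+d).toNat + 1)) a b else 0)
        = if d = 0 then (1 : Matrix (Fin p) (Fin p) ℂ) a b else 0 := by
    intro a b d
    exact fir_extract n hn (fun j k => ((B (j+1))ᴴ * B (k+1)) a b)
      ((1 : Matrix (Fin p) (Fin p) ℂ) a b)
      (fun z hz => by
        have := congrFun (congrFun (hC z hz) a) b
        simpa [Matrix.sum_apply, Matrix.smul_apply, smul_eq_mul] using this) d
  have lagD : ∀ (a b : Fin p) (d : ℤ),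
      (∑ t ∈ range n, if 0 ≤ (t:ℤ) + d ∧ (t:ℤ) + d < (n:ℤ) then
          (B (((t:ℤ)+d).toNat + 1) * (B (t+1))ᴴ) a b else 0)
        = if d = 0 then (1 : Matrix (Fin p) (Fin p) ℂ) a b else 0 := by
    intro a b d
    exact fir_extract n hn (fun j k => (B (k+1) * (B (j+1))ᴴ) a b)
      ((1 : Matrix (Fin p) (Fin p) ℂ) a b)
      (fun z hz => by
        have := congrFun (congrFun (hD z hz) a) b
        rw [Finset.sum_comm]
        simpa [Matrix.sum_apply, Matrix.smul_apply, smul_eq_mul] using this) d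
  have h1 := fir_claim1 p n B H₀ hH₀ lagC
  have h2 := fir_claim2 p n B lagD
  have h3 := fir_claim3 p n B lagC
  have hP : 1 - H₀ᴴ * H₀ = (Rm p n B)ᴴ * (Rm p n B) := by
    rw [← h1]; abel
  have hRR : (Rm p n B) * (Rm p n B)ᴴ = 1 - (H1m p n B) * (H1m p n B)ᴴ := by
    rw [← h2]; abel
  constructor
  · rw [hP, Matrix.conjTranspose_mul, Matrix.conjTranspose_conjTranspose]
  · rw [hP]
    calc (Rm p n B)ᴴ * (Rm p n B) * ((Rm p n B)ᴴ * (Rm p n B))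
        = (Rm p n B)ᴴ * ((Rm p n B) * (Rm p n B)ᴴ) * (Rm p n B) := by
          rw [Matrix.mul_assoc, Matrix.mul_assoc, Matrix.mul_assoc]
      _ = (Rm p n B)ᴴ * (1 - (H1m p n B) * (H1m p n B)ᴴ) * (Rm p n B) := by rw [hRR]
      _ = (Rm p n B)ᴴ * (Rm p n B)
            - (Rm p n B)ᴴ * (H1m p n B) * ((H1m p n B)ᴴ * (Rm p n B)) := by
          rw [Matrix.mul_sub, Matrix.sub_mul, Matrix.mul_one]
          congr 1
          rw [Matrix.mul_assoc, Matrix.mul_assoc, Matrix.mul_assoc]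
      _ = (Rm p n B)ᴴ * (Rm p n B) := by rw [h3, Matrix.mul_zero, sub_zero]
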